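/- For a finite ensemble E = {(η_i, ρ_i)}_{i∈Λ}, if η₁ρ₁ − η_iρ_i is positive semidefinite for all i ∈ Λ, then for every POVM {M_i}_{i∈Λ} the success probability Σ_i η_i Tr(ρ_i M_i) is at most η₁, and this bound is attained (so p_G(E) = η₁, achieved by the POVM with M₁ = 1). -/

import Mathlib

open Matrix
open scoped ComplexOrder

/-- Hermitian operators on the bipartite space `ℂ^dA ⊗ ℂ^dB`, modeled as matrices
indexed by `Fin dA × Fin dB`. -/
abbrev Mat (dA dB : ℕ) := Matrix (Fin dA × Fin dB) (Fin dA × Fin dB) ℂ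

/-- A bipartite operator is separable if it is a finite sum of Kronecker products of
positive-semidefinite operators on the two factors. -/
def IsSep {dA dB : ℕ} (E : Mat dA dB) : Prop :=
  ∃ (n : ℕ) (A : Fin n → Matrix (Fin dA) (Fin dA) ℂ)
    (B : Fin n → Matrix (Fin dB) (Fin dB) ℂ),
    (∀ l, (A l).PosSemidef) ∧ (∀ l, (B l).PosSemidef) ∧
      E = ∑ l, Matrix.kroneckerMap (· * ·) (A l) (B l)

/-- Membership in the dual cone `SEP*` (block positivity): Hermitian with
`Tr(E F) ≥ 0` for every separable `F`. -/
def InSEPdual {dA dB : ℕ} (E : Mat dA dB) : Prop :=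
  E.IsHermitian ∧ ∀ F : Mat dA dB, IsSep F → 0 ≤ (E * F).trace

lemma myTraceNonneg {m : ℕ} {A : Matrix (Fin m) (Fin m) ℂ} (hA : A.PosSemidef) :
    0 ≤ A.trace := by
  rw [Matrix.trace]
  apply Finset.sum_nonneg
  intro i _
  have := hA.dotProduct_mulVec_nonneg (Pi.single i 1)
  simpa [dotProduct, Matrix.mulVec, Pi.single_apply, Finset.sum_ite_eq] using this

lemma myTraceMulNonneg {m : ℕ} {A B : Matrix (Fin m) (Fin m) ℂ}
    (hA : A.PosSemidef) (hB : B.PosSemidef) : 0 ≤ (A * B).trace := by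
  obtain ⟨C, rfl⟩ : ∃ C : Matrix (Fin m) (Fin m) ℂ, A = Cᴴ * C := by
    open scoped MatrixOrder Matrix.Norms.L2Operator in
    exact CStarAlgebra.nonneg_iff_eq_star_mul_self.mp (Matrix.nonneg_iff_posSemidef.mpr hA)
  rw [Matrix.mul_assoc, Matrix.trace_mul_comm]
  exact myTraceNonneg (hB.mul_mul_conjTranspose_same C)


theorem psd_dominance_povm_bound {n : ℕ} {ι : Type*} [Fintype ι] [DecidableEq ι]
    (η : ι → ℝ) (ρ : ι → Matrix (Fin n) (Fin n) ℂ) (a : ι)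
    (hη : ∀ i, 0 ≤ η i) (hsum : ∑ i, η i = 1)
    (hρ : ∀ i, (ρ i).PosSemidef ∧ (ρ i).trace = 1)
    (hpsd : ∀ i, ((η a : ℂ) • ρ a - (η i : ℂ) • ρ i).PosSemidef) :
    (∀ M : ι → Matrix (Fin n) (Fin n) ℂ,
        (∀ i, (M i).PosSemidef) → ∑ i, M i = 1 →
        ∑ i, η i * ((ρ i * M i).trace).re ≤ η a) ∧
    (∃ M : ι → Matrix (Fin n) (Fin n) ℂ,
        (∀ i, (M i).PosSemidef) ∧ ∑ i, M i = 1 ∧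
        ∑ i, η i * ((ρ i * M i).trace).re = η a) := by
  constructor
  · intro M hM hMsum
    have key : ∀ i, η i * ((ρ i * M i).trace).re ≤ η a * ((ρ a * M i).trace).re := by
      intro i
      have h := myTraceMulNonneg (hpsd i) (hM i)
      rw [Matrix.sub_mul, Matrix.smul_mul, Matrix.smul_mul] at h
      rw [Matrix.trace_sub, Matrix.trace_smul, Matrix.trace_smul] at h
      have hre : (0:ℝ) ≤ ((η a : ℂ) • (ρ a * M i).trace - (η i : ℂ) • (ρ i * M i).trace).re := by
        exact_mod_cast (Complex.le_def.mp h).1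
      simpa [Complex.sub_re, Complex.re_ofReal_mul, smul_eq_mul] using sub_nonneg.mp hre
    calc ∑ i, η i * ((ρ i * M i).trace).re
        ≤ ∑ i, η a * ((ρ a * M i).trace).re := Finset.sum_le_sum fun i _ => key i
      _ = η a * (∑ i, (ρ a * M i).trace).re := by
          rw [← Finset.mul_sum, Complex.re_sum]
      _ = η a := by
          rw [← Matrix.trace_sum]
          simp only [← Matrix.mul_sum, hMsum, Matrix.mul_one, (hρ a).2]
          simp
  · refine ⟨fun i => if i = a then 1 else 0, fun i => ?_, ?_, ?_⟩
    · dsimp only; split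
      · exact Matrix.PosSemidef.one
      · exact Matrix.PosSemidef.zero
    · simp
    · rw [Finset.sum_eq_single a]
      · simp [(hρ a).2]
      · intro b _ hb; simp [hb]
      · intro h; exact absurd (Finset.mem_univ a) h
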